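/- Let y, γ ∈ ℝ, v > 0, β > 0, and define α(o) = log(exp(o) + 1) + 1. Let L(o) = (1/2)·log(π/v) − α(o)·log(Ω) + (α(o) + 1/2)·log((y − γ)²·v + Ω) + log(Real.Gamma(α(o))) − log(Real.Gamma(α(o) + 1/2)), where Ω = 2β(1 + v). Then the derivative of L tends to 0 as o → −∞, i.e., Tendsto (deriv L) atBot (nhds 0). -/

import Mathlib

open Real Filter

/-- SoftPlus activation plus one. -/
noncomputable def softplusAlpha (o : ℝ) : ℝ := Real.log (Real.exp o + 1) + 1

/-- The real part of the derivative of the complex Gamma function, restricted to ℝ. -/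
noncomputable def gammaDeriv (x : ℝ) : ℝ := (deriv Complex.Gamma (x : ℂ)).re

lemma complexGamma_analyticAt {s : ℂ} (hs : 0 < s.re) : AnalyticAt ℂ Complex.Gamma s := by
  rw [Complex.analyticAt_iff_eventually_differentiableAt]
  have hmem : {z : ℂ | 0 < z.re} ∈ nhds s :=
    (isOpen_lt continuous_const Complex.continuous_re).mem_nhds hs
  filter_upwards [hmem] with z hz
  refine Complex.differentiableAt_Gamma z fun m hm => ?_
  have : (0 : ℝ) < (-(m : ℂ)).re := hm ▸ hz
  simp only [Complex.neg_re, Complex.natCast_re] at this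
  have : (0 : ℝ) ≤ (m : ℝ) := Nat.cast_nonneg m
  linarith

lemma continuousAt_gammaDeriv {x : ℝ} (hx : 0 < x) : ContinuousAt gammaDeriv x := by
  have h1 : AnalyticAt ℂ Complex.Gamma (x : ℂ) := complexGamma_analyticAt (by simpa)
  have h2 : AnalyticAt ℂ (fderiv ℂ Complex.Gamma) (x : ℂ) := h1.fderiv
  have h3 : ContinuousAt (fun z : ℂ => fderiv ℂ Complex.Gamma z 1) (x : ℂ) :=
    ((ContinuousLinearMap.apply ℂ ℂ (1 : ℂ)).continuous.continuousAt).comp h2.continuousAt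
  have h4 : ContinuousAt (deriv Complex.Gamma) (x : ℂ) := by
    refine h3.congr ?_
    filter_upwards with z using (fderiv_apply_one_eq_deriv).symm
  exact (Complex.continuous_re.continuousAt).comp
    (h4.comp Complex.continuous_ofReal.continuousAt)

lemma hasDerivAt_realGamma {x : ℝ} (hx : 0 < x) :
    HasDerivAt Real.Gamma (gammaDeriv x) x := by
  have hne : ∀ m : ℕ, (x : ℂ) ≠ -m := by
    intro m hm
    have := congrArg Complex.re hm
    simp only [Complex.ofReal_re, Complex.neg_re, Complex.natCast_re] at this
    have : (0 : ℝ) ≤ (m : ℝ) := Nat.cast_nonneg m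
    linarith
  have h := (Complex.differentiableAt_Gamma (x : ℂ) hne).hasDerivAt.real_of_complex
  refine h.congr_of_eventuallyEq ?_
  filter_upwards with t
  rw [Complex.Gamma_ofReal, Complex.ofReal_re]

lemma softplusAlpha_pos (o : ℝ) : 1 ≤ softplusAlpha o := by
  have : (0 : ℝ) ≤ Real.log (Real.exp o + 1) :=
    Real.log_nonneg (by linarith [Real.exp_pos o])
  unfold softplusAlpha; linarith

lemma hasDerivAt_softplusAlpha (o : ℝ) :
    HasDerivAt softplusAlpha (Real.exp o / (Real.exp o + 1)) o := by
  have h1 : HasDerivAt (fun o : ℝ => Real.exp o + 1) (Real.exp o) o :=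
    (Real.hasDerivAt_exp o).add_const 1
  exact (h1.log (by positivity)).add_const 1

theorem stmt_1 (y γ v β : ℝ) (hv : 0 < v) (hβ : 0 < β) :
    Tendsto
      (deriv (fun o : ℝ =>
        (1 / 2) * Real.log (Real.pi / v)
          - softplusAlpha o * Real.log (2 * β * (1 + v))
          + (softplusAlpha o + 1 / 2) * Real.log ((y - γ) ^ 2 * v + 2 * β * (1 + v))
          + Real.log (Real.Gamma (softplusAlpha o))
          - Real.log (Real.Gamma (softplusAlpha o + 1 / 2))))
      atBot (nhds 0) := by
  set c1 : ℝ := Real.log (2 * β * (1 + v)) with hc1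
  set c2 : ℝ := Real.log ((y - γ) ^ 2 * v + 2 * β * (1 + v)) with hc2
  -- derivative of the outer function F at x > 0
  set G : ℝ → ℝ := fun x =>
    -c1 + c2 + gammaDeriv x / Real.Gamma x
      - gammaDeriv (x + 1 / 2) / Real.Gamma (x + 1 / 2) with hG
  have hF : ∀ x : ℝ, 0 < x →
      HasDerivAt (fun x : ℝ =>
        (1 / 2) * Real.log (Real.pi / v) - x * c1 + (x + 1 / 2) * c2
          + Real.log (Real.Gamma x) - Real.log (Real.Gamma (x + 1 / 2))) (G x) x := by
    intro x hx
    have hx2 : 0 < x + 1 / 2 := by linarith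
    have hΓ1 : 0 < Real.Gamma x := Real.Gamma_pos_of_pos hx
    have hΓ2 : 0 < Real.Gamma (x + 1 / 2) := Real.Gamma_pos_of_pos hx2
    have h1 : HasDerivAt (fun x : ℝ => x * c1) c1 x := by
      simpa using (hasDerivAt_id x).mul_const c1
    have h2 : HasDerivAt (fun x : ℝ => (x + 1 / 2) * c2) c2 x := by
      have := (((hasDerivAt_id x).add_const (1 / 2)).mul_const c2)
      simp at this ⊢; exact this
    have h3 : HasDerivAt (fun x : ℝ => Real.log (Real.Gamma x))
        (gammaDeriv x / Real.Gamma x) x := (hasDerivAt_realGamma hx).log hΓ1.ne'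
    have h4 : HasDerivAt (fun x : ℝ => Real.log (Real.Gamma (x + 1 / 2)))
        (gammaDeriv (x + 1 / 2) / Real.Gamma (x + 1 / 2)) x := by
      have hcomp : HasDerivAt (fun x : ℝ => Real.Gamma (x + 1 / 2))
          (gammaDeriv (x + 1 / 2)) x := by
        have := (hasDerivAt_realGamma hx2).comp x ((hasDerivAt_id x).add_const (1 / 2))
        simp at this ⊢; exact this
      exact hcomp.log hΓ2.ne'
    have := ((((hasDerivAt_const x ((1 : ℝ) / 2 * Real.log (Real.pi / v))).sub h1).add
      h2).add h3).sub h4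
    convert this using 1
    · rfl
    · rfl
    · rfl
    · rw [hG]; ring
  -- derivative of the composite
  have hderiv : ∀ o : ℝ,
      deriv (fun o : ℝ =>
        (1 / 2) * Real.log (Real.pi / v)
          - softplusAlpha o * Real.log (2 * β * (1 + v))
          + (softplusAlpha o + 1 / 2) * Real.log ((y - γ) ^ 2 * v + 2 * β * (1 + v))
          + Real.log (Real.Gamma (softplusAlpha o))
          - Real.log (Real.Gamma (softplusAlpha o + 1 / 2))) o
      = G (softplusAlpha o) * (Real.exp o / (Real.exp o + 1)) := by
    intro o
    have hα := hasDerivAt_softplusAlpha o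
    have hpos : 0 < softplusAlpha o := lt_of_lt_of_le one_pos (softplusAlpha_pos o)
    have := (hF (softplusAlpha o) hpos).comp o hα
    exact this.deriv
  -- limits
  have hαlim : Tendsto softplusAlpha atBot (nhds 1) := by
    have h1 : Tendsto (fun o : ℝ => Real.exp o + 1) atBot (nhds 1) := by
      simpa using Real.tendsto_exp_atBot.add tendsto_const_nhds
    have h2 : Tendsto (fun o : ℝ => Real.log (Real.exp o + 1)) atBot (nhds 0) := by
      have := (Real.continuousAt_log (by norm_num : (1 : ℝ) ≠ 0)).tendsto.comp h1
      simp at this; exact this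
    have := h2.add (tendsto_const_nhds (x := (1 : ℝ)))
    simp at this; exact this
  have hα'lim : Tendsto (fun o : ℝ => Real.exp o / (Real.exp o + 1)) atBot (nhds 0) := by
    have h1 : Tendsto (fun o : ℝ => Real.exp o + 1) atBot (nhds 1) := by
      simpa using Real.tendsto_exp_atBot.add tendsto_const_nhds
    have := Real.tendsto_exp_atBot.div h1 one_ne_zero
    simp at this; exact this
  have hGcont : ContinuousAt G 1 := by
    have hΓc : ∀ x : ℝ, 0 < x → ContinuousAt Real.Gamma x := fun x hx =>
      (hasDerivAt_realGamma hx).differentiableAt.continuousAt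
    have h32 : (0 : ℝ) < 1 + 1 / 2 := by norm_num
    have hΓ1 : Real.Gamma (1 : ℝ) ≠ 0 := (Real.Gamma_pos_of_pos one_pos).ne'
    have hΓ2 : Real.Gamma ((1 : ℝ) + 1 / 2) ≠ 0 := (Real.Gamma_pos_of_pos h32).ne'
    have hadd : ContinuousAt (fun x : ℝ => x + 1 / 2) 1 :=
      (continuous_id.add continuous_const).continuousAt
    refine ContinuousAt.sub (ContinuousAt.add continuousAt_const ?_) ?_
    · exact (continuousAt_gammaDeriv one_pos).div (hΓc 1 one_pos) hΓ1
    · exact (ContinuousAt.comp (f := fun x : ℝ => x + 1 / 2) (continuousAt_gammaDeriv h32) hadd).div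
        (ContinuousAt.comp (f := fun x : ℝ => x + 1 / 2) (hΓc _ h32) hadd) hΓ2
  have hGlim : Tendsto (fun o : ℝ => G (softplusAlpha o)) atBot (nhds (G 1)) :=
    hGcont.tendsto.comp hαlim
  have hmul := hGlim.mul hα'lim
  rw [mul_zero] at hmul
  exact hmul.congr fun o => (hderiv o).symm
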